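/- Let n ≥ 1, let μ ∈ ℤ^n be a dominant coweight, let k < l ≤ k+n be integers, and let v_k, v_l ∈ ℤ^n satisfy: v_k − ω_k ∈ P_μ, v_l − ω_l ∈ P_μ, v_l − v_k has all coordinates in {0,1}, and Σ(v_l) − Σ(v_k) = l − k. Then there exists v_{k+1} ∈ ℤ^n such that v_{k+1} − ω_{k+1} ∈ P_μ, both v_{k+1} − v_k and v_l − v_{k+1} have all coordinates in {0,1}, and Σ(v_{k+1}) = Σ(v_k) + 1. -/

import Mathlib

/-- The vector `ω_i ∈ ℤ^n`, for `i ∈ ℤ`: for `0 ≤ i ≤ n` it is `(1,…,1,0,…,0)` with `i`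
ones, and `ω_{i+n} = ω_i + (1,…,1)`. -/
def omegaVec (n : ℕ) (i : ℤ) : Fin n → ℤ := fun t => (i - ((t : ℤ) + 1)).fdiv n + 1

/-- `P_μ`: the convex hull in `ℝ^n` of the orbit of `μ` under the symmetric group
permuting the coordinates. -/
def Pmu (n : ℕ) (μ : Fin n → ℤ) : Set (Fin n → ℝ) :=
  convexHull ℝ {x : Fin n → ℝ | ∃ σ : Equiv.Perm (Fin n), x = fun t => (μ (σ t) : ℝ)}

/-- `v ∈ P_μ` for an integral vector `v`. -/
def inPmu (n : ℕ) (μ : Fin n → ℤ) (v : Fin n → ℤ) : Prop :=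
  (fun t => (v t : ℝ)) ∈ Pmu n μ

open Finset

/-- Sum of the first `m` coordinates. -/

def topSum {n : ℕ} (μ : Fin n → ℤ) (m : ℕ) : ℤ :=
  ∑ t ∈ Finset.univ.filter (fun t : Fin n => t.val < m), μ t

lemma strictMono_le_val {m n : ℕ} (f : Fin m → Fin n) (hf : StrictMono f) (i : Fin m) :
    (i : ℕ) ≤ (f i : ℕ) := by
  obtain ⟨j, hj⟩ := i
  induction j with
  | zero => simp
  | succ p ih =>
    have h2 : p < m := Nat.lt_of_succ_lt hj
    have h3 := ih h2
    have hlt : f ⟨p, h2⟩ < f ⟨p + 1, hj⟩ := hf (by simp [Fin.lt_def])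
    have h4 := Fin.lt_def.mp hlt
    have e1 : ((⟨p, h2⟩ : Fin m) : ℕ) = p := rfl
    have e2 : ((⟨p + 1, hj⟩ : Fin m) : ℕ) = p + 1 := rfl
    omega

lemma image_eq_of_range {n m : ℕ} (f : Fin m → Fin n) (B : Finset (Fin n))
    (h : Set.range f = ↑B) : Finset.univ.image f = B := by
  apply Finset.coe_injective
  rw [Finset.coe_image, Finset.coe_univ, Set.image_univ, h]

lemma topSum_eq {n : ℕ} (μ : Fin n → ℤ) {m : ℕ} (h : m ≤ n) :
    topSum μ m = ∑ i : Fin m, μ (Fin.castLE h i) := by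
  have hinj : ∀ x ∈ Finset.univ, ∀ y ∈ Finset.univ, Fin.castLE h x = Fin.castLE h y → x = y :=
    fun x _ y _ hxy => Fin.castLE_injective h hxy
  have e1 := Finset.sum_image (f := μ) hinj
  have e2 : Finset.univ.image (Fin.castLE h) =
      Finset.univ.filter (fun t : Fin n => t.val < m) := by
    apply image_eq_of_range
    ext t
    simp only [Set.mem_range, Finset.coe_filter, Set.mem_setOf_eq, Finset.mem_univ, true_and]
    constructor
    · rintro ⟨i, rfl⟩; exact i.2
    · intro ht; exact ⟨⟨t.val, ht⟩, rfl⟩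
  rw [topSum, ← e2, e1]

lemma sum_subset_le_topSum {n : ℕ} {μ : Fin n → ℤ} (hμ : Antitone μ) (B : Finset (Fin n)) :
    ∑ t ∈ B, μ t ≤ topSum μ B.card := by
  have hc : B.card ≤ n := by simpa using Finset.card_le_univ B
  rw [topSum_eq μ hc]
  have hinj : ∀ x ∈ Finset.univ, ∀ y ∈ Finset.univ,
      B.orderEmbOfFin rfl x = B.orderEmbOfFin rfl y → x = y :=
    fun x _ y _ hxy => (B.orderEmbOfFin rfl).injective hxy
  have e1 := Finset.sum_image (f := μ) hinj
  have e2 : Finset.univ.image (B.orderEmbOfFin rfl) = B :=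
    image_eq_of_range _ _ (Finset.range_orderEmbOfFin B rfl)
  rw [e2] at e1
  rw [e1]
  apply Finset.sum_le_sum
  intro i _
  apply hμ
  show (Fin.castLE hc i : ℕ) ≤ _
  simpa using strictMono_le_val _ (B.orderEmbOfFin rfl).strictMono i

def Maj {n : ℕ} (μ z : Fin n → ℤ) : Prop :=
  (∑ t, z t = ∑ t, μ t) ∧ ∀ A : Finset (Fin n), ∑ t ∈ A, z t ≤ topSum μ A.card

lemma pmu_constraints {n : ℕ} {μ : Fin n → ℤ} (hμ : Antitone μ) {x : Fin n → ℝ}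
    (hx : x ∈ Pmu n μ) :
    (∑ t, x t = (∑ t, μ t : ℤ)) ∧
      ∀ A : Finset (Fin n), ∑ t ∈ A, x t ≤ (topSum μ A.card : ℝ) := by
  have hQ : Pmu n μ ⊆ {y : Fin n → ℝ | (∑ t, y t = (∑ t, μ t : ℤ)) ∧
      ∀ A : Finset (Fin n), ∑ t ∈ A, y t ≤ (topSum μ A.card : ℝ)} := by
    apply convexHull_min
    · rintro y ⟨σ, rfl⟩
      constructor
      · push_cast
        simpa using Equiv.sum_comp σ (fun t => (μ t : ℝ))
      · intro A
        have h1 : ∑ t ∈ A, ((μ (σ t) : ℝ)) = ((∑ t ∈ A, μ (σ t) : ℤ) : ℝ) := by push_cast; rfl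
        rw [h1]
        have h2 : ∑ t ∈ A, μ (σ t) = ∑ u ∈ A.image σ, μ u :=
          (Finset.sum_image (fun a _ b _ h => σ.injective h)).symm
        have h3 : (A.image σ).card = A.card := Finset.card_image_of_injective A σ.injective
        have h4 := sum_subset_le_topSum hμ (A.image σ)
        rw [h3] at h4
        exact_mod_cast h2 ▸ h4
    · intro y hy z hz a b ha hb hab
      obtain ⟨hy1, hy2⟩ := hy
      obtain ⟨hz1, hz2⟩ := hz
      constructor
      · simp only [Pi.add_apply, Pi.smul_apply, smul_eq_mul]
        rw [Finset.sum_add_distrib, ← Finset.mul_sum, ← Finset.mul_sum, hy1, hz1,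
          ← add_mul, hab, one_mul]
      · intro A
        simp only [Pi.add_apply, Pi.smul_apply, smul_eq_mul]
        rw [Finset.sum_add_distrib, ← Finset.mul_sum, ← Finset.mul_sum]
        calc a * ∑ t ∈ A, y t + b * ∑ t ∈ A, z t
            ≤ a * (topSum μ A.card : ℝ) + b * (topSum μ A.card : ℝ) := by
              apply add_le_add <;> apply mul_le_mul_of_nonneg_left <;> first | exact hy2 A | exact hz2 A | assumption
          _ = (topSum μ A.card : ℝ) := by rw [← add_mul, hab, one_mul]
  exact hQ hx

lemma maj_of_inPmu {n : ℕ} {μ : Fin n → ℤ} (hμ : Antitone μ) {z : Fin n → ℤ}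
    (hz : inPmu n μ z) : Maj μ z := by
  obtain ⟨h1, h2⟩ := pmu_constraints hμ hz
  constructor
  · exact_mod_cast h1
  · intro A
    exact_mod_cast h2 A

lemma inPmu_comp {n : ℕ} {μ : Fin n → ℤ} {z : Fin n → ℤ} (σ : Equiv.Perm (Fin n))
    (hz : inPmu n μ z) : inPmu n μ (z ∘ σ) := by
  have hQ : Pmu n μ ⊆ {y : Fin n → ℝ | (y ∘ σ) ∈ Pmu n μ} := by
    apply convexHull_min
    · rintro y ⟨τ, rfl⟩
      exact subset_convexHull ℝ _ ⟨τ * σ, rfl⟩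
    · intro y hy z' hz' a b ha hb hab
      have : ((a • y + b • z') ∘ σ) = a • (y ∘ σ) + b • (z' ∘ σ) := rfl
      simp only [Set.mem_setOf_eq, this]
      exact (convex_convexHull ℝ _) hy hz' ha hb hab
  exact hQ hz

lemma topSum_succ {n : ℕ} (x : Fin n → ℤ) {m : ℕ} (h : m < n) :
    topSum x (m + 1) = topSum x m + x ⟨m, h⟩ := by
  have : Finset.univ.filter (fun t : Fin n => t.val < m + 1) =
      insert ⟨m, h⟩ (Finset.univ.filter (fun t : Fin n => t.val < m)) := by
    ext t
    simp only [Finset.mem_filter, Finset.mem_univ, true_and, Finset.mem_insert]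
    constructor
    · intro ht
      rcases Nat.lt_or_ge t.val m with h1 | h1
      · exact Or.inr h1
      · left; apply Fin.ext; simpa using by omega
    · rintro (rfl | ht)
      · simp
      · omega
  rw [topSum, this, Finset.sum_insert (by simp)]
  rw [topSum]; ring

lemma topSum_univ {n : ℕ} (x : Fin n → ℤ) : topSum x n = ∑ t, x t := by
  rw [topSum]
  congr 1
  apply Finset.filter_true_of_mem
  intro t _
  exact t.2

lemma card_prefix {n m : ℕ} (h : m ≤ n) :
    (Finset.univ.filter (fun t : Fin n => t.val < m)).card = m := by
  have e2 : Finset.univ.image (Fin.castLE h) =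
      Finset.univ.filter (fun t : Fin n => t.val < m) := by
    apply Finset.coe_injective
    rw [Finset.coe_image, Finset.coe_univ, Set.image_univ]
    ext t
    simp only [Set.mem_range, Finset.coe_filter, Set.mem_setOf_eq, Finset.mem_univ, true_and]
    constructor
    · rintro ⟨i, rfl⟩; exact i.2
    · intro ht; exact ⟨⟨t.val, ht⟩, rfl⟩
  rw [← e2, Finset.card_image_of_injective _ (Fin.castLE_injective h)]
  simp

lemma pmu_transfer {n : ℕ} (μ : Fin n → ℤ) (a' b' : Fin n) (hd : 2 ≤ μ a' - μ b') :
    Pmu n (fun t => if t = a' then μ a' - 1 else if t = b' then μ b' + 1 else μ t) ⊆ Pmu n μ := by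
  set μ' : Fin n → ℤ := fun t => if t = a' then μ a' - 1 else if t = b' then μ b' + 1 else μ t with hμ'
  have hne : a' ≠ b' := by intro h; rw [h] at hd; omega
  set d : ℝ := ((μ a' : ℝ) - μ b') with hdd
  have hd2 : (2 : ℝ) ≤ d := by rw [hdd]; exact_mod_cast hd
  have hdpos : 0 < d := by linarith
  set lam : ℝ := 1 / d with hlam
  have hlam0 : 0 ≤ lam := by positivity
  have hlam1 : lam ≤ 1 / 2 := by
    rw [hlam, div_le_div_iff₀ hdpos (by norm_num)]
    linarith
  have hld' : lam * ((μ a' : ℝ) - (μ b' : ℝ)) = 1 := by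
    rw [hlam, ← hdd]; field_simp
  apply convexHull_min
  · rintro y ⟨τ, rfl⟩
    have hmem1 : (fun t => (μ (τ t) : ℝ)) ∈ Pmu n μ :=
      subset_convexHull ℝ _ ⟨τ, rfl⟩
    have hmem2 : (fun t => (μ ((Equiv.swap a' b' * τ) t) : ℝ)) ∈ Pmu n μ :=
      subset_convexHull ℝ _ ⟨Equiv.swap a' b' * τ, rfl⟩
    have key : (fun t => (μ' (τ t) : ℝ)) =
        (1 - lam) • (fun t => (μ (τ t) : ℝ)) + lam • (fun t => (μ ((Equiv.swap a' b' * τ) t) : ℝ)) := by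
      funext t
      simp only [Pi.add_apply, Pi.smul_apply, smul_eq_mul]
      have hswap : (Equiv.swap a' b' * τ) t = Equiv.swap a' b' (τ t) := rfl
      rw [hswap]
      rcases eq_or_ne (τ t) a' with h1 | h1
      · rw [h1, Equiv.swap_apply_left]
        have hv : μ' a' = μ a' - 1 := if_pos rfl
        rw [hv]
        push_cast
        linear_combination hld'
      rcases eq_or_ne (τ t) b' with h2 | h2
      · rw [h2, Equiv.swap_apply_right]
        have hv : μ' b' = μ b' + 1 := by
          show (if b' = a' then μ a' - 1 else if b' = b' then μ b' + 1 else μ b') = μ b' + 1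
          rw [if_neg hne.symm, if_pos rfl]
        rw [hv]
        push_cast
        linear_combination -hld'
      · rw [Equiv.swap_apply_of_ne_of_ne h1 h2]
        have hv : μ' (τ t) = μ (τ t) := by
          show (if τ t = a' then _ else if τ t = b' then _ else μ (τ t)) = μ (τ t)
          rw [if_neg h1, if_neg h2]
        rw [hv]
        ring_nf
    rw [key]
    exact (convex_convexHull ℝ _) hmem1 hmem2 (by linarith) hlam0 (by ring)
  · exact convex_convexHull ℝ _

lemma ediv_of_interval (n : ℕ) (hn : 0 < n) (q r : ℤ) (h0 : 0 ≤ r) (h1 : r < n) :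
    (r + n * q) / n = q := by
  rw [Int.add_mul_ediv_left r q (by exact_mod_cast hn.ne')]
  rw [Int.ediv_eq_zero_of_lt h0 h1, zero_add]

lemma fdiv_succ (n : ℕ) (hn : 0 < n) (c : ℤ) :
    (c + 1).fdiv n = c.fdiv n + if (n : ℤ) ∣ (c + 1) then 1 else 0 := by
  have hn' : (0 : ℤ) < n := by exact_mod_cast hn
  rw [Int.fdiv_eq_ediv_of_nonneg _ (le_of_lt hn'), Int.fdiv_eq_ediv_of_nonneg _ (le_of_lt hn')]
  set r : ℤ := (c + 1) % n with hr
  have hr0 : 0 ≤ r := Int.emod_nonneg _ hn'.ne'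
  have hr1 : r < n := Int.emod_lt_of_pos _ hn'
  have hq : c + 1 = r + n * ((c + 1) / n) := by
    rw [hr]; have := Int.mul_ediv_add_emod (c + 1) n; omega
  by_cases h : r = 0
  · have hdvd : (n : ℤ) ∣ (c + 1) := Int.dvd_of_emod_eq_zero (by rw [← hr]; exact h)
    rw [if_pos hdvd]
    have hc : c / (n:ℤ) = (c + 1) / n - 1 := by
      have e1 : c = (n - 1) + n * ((c + 1) / n - 1) := by rw [mul_sub]; omega
      calc c / (n:ℤ) = ((n - 1) + n * ((c + 1) / n - 1)) / n := by rw [← e1]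
        _ = (c + 1) / n - 1 := ediv_of_interval n hn _ _ (by omega) (by omega)
    omega
  · have hdvd : ¬ (n : ℤ) ∣ (c + 1) := by
      intro hd
      exact h (by rw [hr]; exact Int.emod_eq_zero_of_dvd hd)
    rw [if_neg hdvd]
    have hc : c / (n:ℤ) = (c + 1) / n := by
      have e1 : c = (r - 1) + n * ((c + 1) / n) := by omega
      calc c / (n:ℤ) = ((r - 1) + n * ((c + 1) / n)) / n := by rw [← e1]
        _ = (c + 1) / n := ediv_of_interval n hn _ _ (by omega) (by omega)
    omega

lemma omega_succ (n : ℕ) (hn : 0 < n) (i : ℤ) (t : Fin n) :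
    omegaVec n (i + 1) t = omegaVec n i t + (if (n : ℤ) ∣ (i - (t : ℤ)) then 1 else 0) := by
  unfold omegaVec
  have h1 : i + 1 - ((t : ℤ) + 1) = (i - ((t : ℤ) + 1)) + 1 := by ring
  rw [h1, fdiv_succ n hn]
  have h2 : i - ((t : ℤ) + 1) + 1 = i - (t : ℤ) := by ring
  rw [h2]
  ring

lemma omega_period (n : ℕ) (hn : 0 < n) (i : ℤ) (t : Fin n) :
    omegaVec n (i + n) t = omegaVec n i t + 1 := by
  unfold omegaVec
  have hn' : (0 : ℤ) < n := by exact_mod_cast hn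
  rw [Int.fdiv_eq_ediv_of_nonneg _ (le_of_lt hn'), Int.fdiv_eq_ediv_of_nonneg _ (le_of_lt hn')]
  have h1 : i + n - ((t : ℤ) + 1) = (i - ((t : ℤ) + 1)) + n * 1 := by ring
  rw [h1, Int.add_mul_ediv_left _ 1 hn'.ne']

lemma omega_mono (n : ℕ) (hn : 0 < n) (i : ℤ) (j : ℕ) (t : Fin n) :
    omegaVec n i t ≤ omegaVec n (i + j) t := by
  induction j with
  | zero => simp
  | succ p ih =>
    have h1 : i + (↑(p + 1) : ℤ) = (i + p) + 1 := by push_cast; ring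
    rw [h1, omega_succ n hn]
    have : (0:ℤ) ≤ if (n : ℤ) ∣ (i + p - (t : ℤ)) then 1 else 0 := by positivity
    omega

/-- the coordinate where `ω` jumps between `i` and `i+1` -/

def jumpIdx (n : ℕ) (hn : 0 < n) (i : ℤ) : Fin n :=
  ⟨(i % n).toNat, by
    have h1 : 0 ≤ i % n := Int.emod_nonneg _ (by exact_mod_cast hn.ne')
    have h2 : i % n < n := Int.emod_lt_of_pos _ (by exact_mod_cast hn)
    omega⟩

lemma jump_iff (n : ℕ) (hn : 0 < n) (i : ℤ) (t : Fin n) :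
    (n : ℤ) ∣ (i - (t : ℤ)) ↔ t = jumpIdx n hn i := by
  have h1 : 0 ≤ i % n := Int.emod_nonneg _ (by exact_mod_cast hn.ne')
  have h2 : i % n < n := Int.emod_lt_of_pos _ (by exact_mod_cast hn)
  constructor
  · intro hd
    have h3 : i % n = (t : ℤ) % n := Int.emod_eq_emod_iff_emod_sub_eq_zero.mpr
      (Int.emod_eq_zero_of_dvd hd)
    have h4 : ((t : ℤ)) % n = (t : ℤ) := Int.emod_eq_of_lt (by positivity) (by exact_mod_cast t.2)
    apply Fin.ext
    show t.val = (i % n).toNat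
    omega
  · intro ht
    subst ht
    show (n : ℤ) ∣ (i - ((i % n).toNat : ℤ))
    have h5 : ((i % n).toNat : ℤ) = i % n := Int.toNat_of_nonneg h1
    rw [h5]
    exact Int.dvd_self_sub_of_emod_eq rfl

lemma omega_succ' (n : ℕ) (hn : 0 < n) (i : ℤ) (t : Fin n) :
    omegaVec n (i + 1) t = omegaVec n i t + (if t = jumpIdx n hn i then 1 else 0) := by
  rw [omega_succ n hn]
  congr 1
  simp only [jump_iff n hn i t]

lemma omega_sum_succ (n : ℕ) (hn : 0 < n) (i : ℤ) :
    (∑ t, omegaVec n (i + 1) t) = (∑ t, omegaVec n i t) + 1 := by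
  rw [Finset.sum_congr rfl (fun t _ => omega_succ' n hn i t), Finset.sum_add_distrib,
    Finset.sum_ite_eq' Finset.univ (jumpIdx n hn i) (fun _ => (1:ℤ))]
  simp

lemma omega_sum_diff (n : ℕ) (hn : 0 < n) (i : ℤ) (j : ℕ) :
    (∑ t, omegaVec n (i + j) t) = (∑ t, omegaVec n i t) + j := by
  induction j with
  | zero => simp
  | succ p ih =>
    have h1 : i + (↑(p + 1) : ℤ) = (i + p) + 1 := by push_cast; ring
    rw [h1, omega_sum_succ n hn, ih]
    push_cast
    ring

lemma topSum_zero {n : ℕ} (μ : Fin n → ℤ) : topSum μ 0 = 0 := by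
  rw [topSum, Finset.filter_false_of_mem (fun t _ => Nat.not_lt_zero _), Finset.sum_empty]

/-- extension of `μ` to `ℕ` -/

def extVec {n : ℕ} (μ : Fin n → ℤ) : ℕ → ℤ := fun m => if h : m < n then μ ⟨m, h⟩ else 0

lemma topSum_eq_range {n : ℕ} (μ : Fin n → ℤ) : ∀ m, m ≤ n →
    topSum μ m = ∑ j ∈ Finset.range m, extVec μ j := by
  intro m
  induction m with
  | zero => intro _; rw [topSum_zero, Finset.range_zero, Finset.sum_empty]
  | succ p ih =>
    intro h
    have hpn : p < n := h
    rw [topSum_succ μ hpn, Finset.sum_range_succ, ih (le_of_lt hpn)]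
    have : extVec μ p = μ ⟨p, hpn⟩ := dif_pos hpn
    rw [this]

lemma topSum_concave {n : ℕ} {μ : Fin n → ℤ} (hμ : Antitone μ) (u v a b w : ℕ)
    (hun : u ≤ n) (hbn : b ≤ n) (hva : v ≤ a) (hw1 : u = a + w) (hw2 : b = v + w) :
    topSum μ u + topSum μ v ≤ topSum μ a + topSum μ b := by
  have han : a ≤ n := by omega
  have hvn : v ≤ n := by omega
  rw [topSum_eq_range μ u hun, topSum_eq_range μ v hvn, topSum_eq_range μ a han,
    topSum_eq_range μ b hbn]
  have e1 : ∑ j ∈ Finset.range u, extVec μ j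
      = ∑ j ∈ Finset.range a, extVec μ j + ∑ j ∈ Finset.Ico a u, extVec μ j := by
    rw [Finset.range_eq_Ico, Finset.range_eq_Ico]
    exact (Finset.sum_Ico_consecutive (extVec μ) (Nat.zero_le a) (by omega : a ≤ u)).symm
  have e2 : ∑ j ∈ Finset.range b, extVec μ j
      = ∑ j ∈ Finset.range v, extVec μ j + ∑ j ∈ Finset.Ico v b, extVec μ j := by
    rw [Finset.range_eq_Ico, Finset.range_eq_Ico]
    exact (Finset.sum_Ico_consecutive (extVec μ) (Nat.zero_le v) (by omega : v ≤ b)).symm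
  rw [e1, e2]
  have e3 : ∑ j ∈ Finset.Ico a u, extVec μ j ≤ ∑ j ∈ Finset.Ico v b, extVec μ j := by
    rw [Finset.sum_Ico_eq_sum_range, Finset.sum_Ico_eq_sum_range,
      show u - a = w from by omega, show b - v = w from by omega]
    apply Finset.sum_le_sum
    intro j hj
    have hj1 : j < w := Finset.mem_range.mp hj
    have h1 : a + j < n := by omega
    have h2 : v + j < n := by omega
    have e4 : extVec μ (a + j) = μ ⟨a + j, h1⟩ := dif_pos h1
    have e5 : extVec μ (v + j) = μ ⟨v + j, h2⟩ := dif_pos h2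
    rw [e4, e5]
    exact hμ (by simp [Fin.le_def]; omega)
  omega

lemma topSum_submodular {n : ℕ} {μ : Fin n → ℤ} (hμ : Antitone μ) (A B : Finset (Fin n)) :
    topSum μ (A ∪ B).card + topSum μ (A ∩ B).card ≤ topSum μ A.card + topSum μ B.card :=
by
  have h1 : (A ∪ B).card + (A ∩ B).card = A.card + B.card := Finset.card_union_add_card_inter A B
  have h2 : A.card ≤ (A ∪ B).card := Finset.card_le_card Finset.subset_union_left
  have h3 : (A ∩ B).card ≤ B.card := Finset.card_le_card Finset.inter_subset_right
  have h4 : (A ∩ B).card ≤ A.card := Finset.card_le_card Finset.inter_subset_left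
  exact topSum_concave hμ _ _ _ _ ((A ∪ B).card - A.card)
    (by simpa using Finset.card_le_univ (A ∪ B))
    (by simpa using Finset.card_le_univ B) h4 (by omega) (by omega)

lemma exists_tight_superset {n : ℕ} {μ : Fin n → ℤ} (hμ : Antitone μ) {x : Fin n → ℤ}
    (hx : ∀ A : Finset (Fin n), ∑ t ∈ A, x t ≤ topSum μ A.card) (t0 : Fin n) :
    ∀ (F : Finset (Fin n)), (∀ s ∈ F, ∃ A : Finset (Fin n), s ∈ A ∧ t0 ∉ A ∧
      ∑ t ∈ A, x t = topSum μ A.card) →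
    ∃ A : Finset (Fin n), F ⊆ A ∧ t0 ∉ A ∧ ∑ t ∈ A, x t = topSum μ A.card := by
  intro F
  induction F using Finset.induction_on with
  | empty =>
    intro _
    exact ⟨∅, Finset.empty_subset _, Finset.notMem_empty _, by
      rw [Finset.sum_empty, Finset.card_empty, topSum_zero]⟩
  | @insert s F' hs ih =>
    intro hF
    obtain ⟨A1, hA1sub, hA1t0, hA1tight⟩ := ih (fun t ht => hF t (Finset.mem_insert_of_mem ht))
    obtain ⟨A2, hA2s, hA2t0, hA2tight⟩ := hF s (Finset.mem_insert_self s F')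
    refine ⟨A1 ∪ A2, ?_, ?_, ?_⟩
    · intro t ht
      rcases Finset.mem_insert.mp ht with rfl | ht'
      · exact Finset.mem_union_right _ hA2s
      · exact Finset.mem_union_left _ (hA1sub ht')
    · intro hc
      rcases Finset.mem_union.mp hc with h | h
      · exact hA1t0 h
      · exact hA2t0 h
    · have h1 := topSum_submodular hμ A1 A2
      have h2 := hx (A1 ∪ A2)
      have h3 := hx (A1 ∩ A2)
      have h4 : ∑ t ∈ A1 ∪ A2, x t + ∑ t ∈ A1 ∩ A2, x t = ∑ t ∈ A1, x t + ∑ t ∈ A2, x t :=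
        Finset.sum_union_inter
      omega

lemma inPmu_self {n : ℕ} (μ : Fin n → ℤ) : inPmu n μ μ :=
  subset_convexHull ℝ _ ⟨1, by funext t; simp⟩

lemma rado_sorted {n : ℕ} (N : ℕ) :
    ∀ (μ z : Fin n → ℤ), Antitone μ → Antitone z →
    (∀ m, m ≤ n → topSum z m ≤ topSum μ m) →
    (∑ t, z t = ∑ t, μ t) →
    (∑ m ∈ Finset.range (n+1), (topSum μ m - topSum z m)) ≤ (N : ℤ) →
    inPmu n μ z := by
  induction N with
  | zero =>
    intro μ z hμ hz hpre htot hN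
    have hall : ∀ m ∈ Finset.range (n+1), topSum μ m - topSum z m = 0 := by
      have hnn : ∀ m ∈ Finset.range (n+1), 0 ≤ topSum μ m - topSum z m := by
        intro m hm
        have := hpre m (by simpa using Nat.lt_succ_iff.mp (Finset.mem_range.mp hm))
        omega
      have hzero : ∑ m ∈ Finset.range (n+1), (topSum μ m - topSum z m) = 0 :=
        le_antisymm (by exact_mod_cast hN) (Finset.sum_nonneg hnn)
      exact (Finset.sum_eq_zero_iff_of_nonneg hnn).mp hzero
    have hzeq : z = μ := by
      funext t
      have h1 := hall t.val (Finset.mem_range.mpr (by omega))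
      have h2 := hall (t.val + 1) (Finset.mem_range.mpr (by omega))
      rw [topSum_succ z t.2, topSum_succ μ t.2] at h2
      simp only [Fin.eta] at h2
      omega
    rw [hzeq]
    exact inPmu_self μ
  | succ N0 ih =>
    intro μ z hμ hz hpre htot hN
    by_cases hzeq : z = μ
    · rw [hzeq]; exact inPmu_self μ
    -- the minimal index where z and μ differ
    have hD : (Finset.univ.filter fun t : Fin n => z t ≠ μ t).Nonempty := by
      by_contra h
      apply hzeq
      funext t
      by_contra ht
      exact h ⟨t, Finset.mem_filter.mpr ⟨Finset.mem_univ t, ht⟩⟩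
    set a := (Finset.univ.filter fun t : Fin n => z t ≠ μ t).min' hD with ha_def
    have haD : z a ≠ μ a := (Finset.mem_filter.mp ((Finset.univ.filter
      fun t : Fin n => z t ≠ μ t).min'_mem hD)).2
    have hlt_a : ∀ t : Fin n, t < a → z t = μ t := by
      intro t ht
      by_contra h
      exact absurd (Finset.min'_le _ t (Finset.mem_filter.mpr ⟨Finset.mem_univ t, h⟩))
        (not_le.mpr ht)
    have hpre_a : ∀ m, m ≤ a.val → topSum z m = topSum μ m := by
      intro m hm
      apply Finset.sum_congr rfl
      intro t ht
      apply hlt_a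
      have := (Finset.mem_filter.mp ht).2
      exact Fin.lt_def.mpr (by omega)
    have hza : z a < μ a := by
      have h1 := hpre (a.val + 1) a.2
      rw [topSum_succ z a.2, topSum_succ μ a.2] at h1
      simp only [Fin.eta] at h1
      have h2 := hpre_a a.val (le_refl _)
      omega
    -- the minimal index above a where z exceeds μ
    have hEne : (Finset.univ.filter fun t : Fin n => a < t ∧ μ t < z t).Nonempty := by
      by_contra hE
      have hle : ∀ t ∈ Finset.univ, z t ≤ μ t := by
        intro t _
        rcases lt_trichotomy t a with h | h | h
        · exact le_of_eq (hlt_a t h)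
        · rw [h]; exact le_of_lt hza
        · by_contra hc
          exact hE ⟨t, Finset.mem_filter.mpr ⟨Finset.mem_univ t, h, not_le.mp hc⟩⟩
      have : ∑ t, z t < ∑ t, μ t :=
        Finset.sum_lt_sum hle ⟨a, Finset.mem_univ a, hza⟩
      omega
    set b := (Finset.univ.filter fun t : Fin n => a < t ∧ μ t < z t).min' hEne with hb_def
    have hbE := Finset.mem_filter.mp ((Finset.univ.filter
      fun t : Fin n => a < t ∧ μ t < z t).min'_mem hEne)
    have hab : a < b := hbE.2.1
    have hzb : μ b < z b := hbE.2.2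
    have hlt_b : ∀ t : Fin n, t < b → z t ≤ μ t := by
      intro t ht
      rcases lt_trichotomy t a with h | h | h
      · exact le_of_eq (hlt_a t h)
      · rw [h]; exact le_of_lt hza
      · by_contra hc
        exact absurd (Finset.min'_le _ t (Finset.mem_filter.mpr
          ⟨Finset.mem_univ t, h, not_le.mp hc⟩)) (not_le.mpr ht)
    have hchain : μ b + 2 ≤ μ a := by
      have h1 : z b ≤ z a := hz (le_of_lt hab)
      omega
    -- a' : last index with value μ a ; b' : first index with value μ b
    have haA : a ∈ Finset.univ.filter fun t : Fin n => μ t = μ a :=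
      Finset.mem_filter.mpr ⟨Finset.mem_univ a, rfl⟩
    set a' := (Finset.univ.filter fun t : Fin n => μ t = μ a).max' ⟨a, haA⟩ with ha'_def
    have ha'v : μ a' = μ a := (Finset.mem_filter.mp ((Finset.univ.filter
      fun t : Fin n => μ t = μ a).max'_mem ⟨a, haA⟩)).2
    have ha'ge : a ≤ a' := Finset.le_max' _ a haA
    have hgt_a' : ∀ t : Fin n, a' < t → μ t ≤ μ a - 1 := by
      intro t ht
      have h1 : μ t ≤ μ a' := hμ (le_of_lt ht)
      have h2 : μ t ≠ μ a := by
        intro h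
        exact absurd (Finset.le_max' _ t (Finset.mem_filter.mpr ⟨Finset.mem_univ t, h⟩))
          (not_le.mpr ht)
      omega
    have hbB : b ∈ Finset.univ.filter fun t : Fin n => μ t = μ b :=
      Finset.mem_filter.mpr ⟨Finset.mem_univ b, rfl⟩
    set b' := (Finset.univ.filter fun t : Fin n => μ t = μ b).min' ⟨b, hbB⟩ with hb'_def
    have hb'v : μ b' = μ b := (Finset.mem_filter.mp ((Finset.univ.filter
      fun t : Fin n => μ t = μ b).min'_mem ⟨b, hbB⟩)).2
    have hb'le : b' ≤ b := Finset.min'_le _ b hbB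
    have hlt_b' : ∀ t : Fin n, t < b' → μ b + 1 ≤ μ t := by
      intro t ht
      have h1 : μ b' ≤ μ t := hμ (le_of_lt ht)
      have h2 : μ t ≠ μ b := by
        intro h
        exact absurd (Finset.min'_le _ t (Finset.mem_filter.mpr ⟨Finset.mem_univ t, h⟩))
          (not_le.mpr ht)
      omega
    have ha'b' : a' < b' := by
      by_contra h
      have h1 : b' ≤ a' := not_lt.mp h
      have h2 : μ a' ≤ μ b' := hμ h1
      omega
    have ha'b'ne : a' ≠ b' := ne_of_lt ha'b'
    have ha'val : a.val ≤ a'.val := Fin.le_def.mp ha'ge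
    have hb'val : b'.val ≤ b.val := Fin.le_def.mp hb'le
    have hab'val : a'.val < b'.val := Fin.lt_def.mp ha'b'
    set μ' : Fin n → ℤ := fun t => if t = a' then μ a' - 1 else if t = b' then μ b' + 1 else μ t
      with hμ'_def
    have hva' : μ' a' = μ a - 1 := by
      show (if a' = a' then μ a' - 1 else _) = μ a - 1
      rw [if_pos rfl, ha'v]
    have hvb' : μ' b' = μ b + 1 := by
      show (if b' = a' then _ else if b' = b' then μ b' + 1 else _) = μ b + 1
      rw [if_neg ha'b'ne.symm, if_pos rfl, hb'v]
    have hvo : ∀ t, t ≠ a' → t ≠ b' → μ' t = μ t := by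
      intro t h1 h2
      show (if t = a' then _ else if t = b' then _ else μ t) = μ t
      rw [if_neg h1, if_neg h2]
    -- μ' is antitone
    have hμ'anti : Antitone μ' := by
      intro s t hst
      rcases eq_or_ne s a' with hs1 | hs1
      · subst hs1
        rcases eq_or_ne t a' with ht1 | ht1
        · rw [ht1]
        rcases eq_or_ne t b' with ht2 | ht2
        · rw [ht2, hvb', hva']; omega
        · rw [hvo t ht1 ht2, hva']
          exact le_trans (hgt_a' t (lt_of_le_of_ne hst (Ne.symm ht1))) (le_refl _)
      rcases eq_or_ne s b' with hs2 | hs2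
      · subst hs2
        rcases eq_or_ne t a' with ht1 | ht1
        · exact absurd (lt_of_lt_of_le ha'b' (ht1 ▸ hst)) (lt_irrefl a')
        rcases eq_or_ne t b' with ht2 | ht2
        · rw [ht2]
        · rw [hvo t ht1 ht2, hvb']
          have : μ t ≤ μ b' := hμ hst
          omega
      · rcases eq_or_ne t a' with ht1 | ht1
        · subst ht1
          rw [hvo s hs1 hs2, hva']
          have : μ a' ≤ μ s := hμ hst
          omega
        rcases eq_or_ne t b' with ht2 | ht2
        · subst ht2
          rw [hvo s hs1 hs2, hvb']
          exact hlt_b' s (lt_of_le_of_ne hst hs2)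
        · rw [hvo t ht1 ht2, hvo s hs1 hs2]
          exact hμ hst
    -- topSum of μ'
    have hts : ∀ m, topSum μ' m = topSum μ m - (if a'.val < m then 1 else 0)
        + (if b'.val < m then 1 else 0) := by
      intro m
      have hpt : ∀ t : Fin n, μ' t = μ t + ((if t = b' then (1:ℤ) else 0)
          - (if t = a' then (1:ℤ) else 0)) := by
        intro t
        rcases eq_or_ne t a' with h1 | h1
        · subst h1; rw [hva', if_neg ha'b'ne, if_pos rfl, ha'v]; ring
        rcases eq_or_ne t b' with h2 | h2
        · subst h2; rw [hvb', if_pos rfl, if_neg ha'b'ne.symm, hb'v]; ring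
        · rw [hvo t h1 h2, if_neg h2, if_neg h1]; ring
      show (∑ t ∈ Finset.univ.filter (fun t : Fin n => t.val < m), μ' t) = _
      rw [Finset.sum_congr rfl (fun t _ => hpt t), Finset.sum_add_distrib,
        Finset.sum_sub_distrib, Finset.sum_ite_eq' _ b' (fun _ => (1:ℤ)),
        Finset.sum_ite_eq' _ a' (fun _ => (1:ℤ))]
      have hma : (a' ∈ Finset.univ.filter fun t : Fin n => t.val < m) ↔ a'.val < m := by
        simp [Finset.mem_filter]
      have hmb : (b' ∈ Finset.univ.filter fun t : Fin n => t.val < m) ↔ b'.val < m := by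
        simp [Finset.mem_filter]
      by_cases h1 : a'.val < m <;> by_cases h2 : b'.val < m <;>
        simp [hma, hmb, h1, h2, topSum] <;> ring
    -- strict prefix inequality on (a, b]
    have hstrict : ∀ m, a.val < m → m ≤ b.val → topSum z m ≤ topSum μ m - 1 := by
      intro m
      induction m with
      | zero => intro h1 _; exact absurd h1 (Nat.not_lt_zero _)
      | succ p ihp =>
        intro h1 h2
        have hpn : p < n := lt_trans (by omega : p < b.val) b.2
        rw [topSum_succ z hpn, topSum_succ μ hpn]
        rcases Nat.lt_or_ge a.val p with hp | hp
        · have h3 := ihp hp (by omega)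
          have h4 : z ⟨p, hpn⟩ ≤ μ ⟨p, hpn⟩ :=
            hlt_b _ (Fin.lt_def.mpr (by simpa using (by omega : p < b.val)))
          omega
        · have hap : p = a.val := by omega
          have h3 : topSum z p = topSum μ p := hpre_a p (by omega)
          have h4 : (⟨p, hpn⟩ : Fin n) = a := Fin.ext hap
          rw [h4]
          omega
    -- prefix inequality for μ'
    have hpre' : ∀ m, m ≤ n → topSum z m ≤ topSum μ' m := by
      intro m hm
      rw [hts m]
      by_cases h1 : a'.val < m
      · by_cases h2 : b'.val < m
        · have := hpre m hm
          simp only [if_pos h1, if_pos h2]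
          omega
        · have h3 := hstrict m (by omega) (by omega)
          simp only [if_pos h1, if_neg h2]
          omega
      · have h2 : ¬ b'.val < m := by omega
        have := hpre m hm
        simp only [if_neg h1, if_neg h2]
        omega
    -- total sum for μ'
    have htot' : ∑ t, z t = ∑ t, μ' t := by
      rw [← topSum_univ z, ← topSum_univ μ', hts n, topSum_univ z, topSum_univ μ,
        if_pos a'.2, if_pos b'.2]
      omega
    -- measure decreases
    have hmeas : (∑ m ∈ Finset.range (n+1), (topSum μ' m - topSum z m)) ≤ (N0 : ℤ) := by
      have hlt : (∑ m ∈ Finset.range (n+1), (topSum μ' m - topSum z m)) <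
          ∑ m ∈ Finset.range (n+1), (topSum μ m - topSum z m) := by
        apply Finset.sum_lt_sum
        · intro m _
          rw [hts m]
          by_cases h2 : b'.val < m
          · have h1 : a'.val < m := by omega
            simp only [if_pos h1, if_pos h2]; omega
          · by_cases h1 : a'.val < m <;> simp only [h1, h2, if_pos, if_neg, if_true, if_false] <;>
              omega
        · refine ⟨b'.val, Finset.mem_range.mpr (by have := b'.2; omega), ?_⟩
          rw [hts b'.val]
          simp only [if_pos hab'val, if_neg (lt_irrefl b'.val)]
          omega
      have hcast : ((N0 : ℤ) + 1) = ((N0 + 1 : ℕ) : ℤ) := by push_cast; ring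
      omega
    have hz' := ih μ' z hμ'anti hz hpre' htot' hmeas
    exact pmu_transfer μ a' b' (by omega) hz'

lemma maj_comp {n : ℕ} {μ z : Fin n → ℤ} (ρ : Equiv.Perm (Fin n)) (h : Maj μ z) :
    Maj μ (z ∘ ρ) := by
  constructor
  · rw [show (∑ t, (z ∘ ρ) t) = ∑ t, z t from Equiv.sum_comp ρ z]
    exact h.1
  · intro A
    have h2 : ∑ t ∈ A, z (ρ t) = ∑ u ∈ A.image ρ, z u :=
      (Finset.sum_image (fun a _ b _ hab => ρ.injective hab)).symm
    have h3 : (A.image ρ).card = A.card := Finset.card_image_of_injective A ρ.injective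
    have h4 := h.2 (A.image ρ)
    rw [h3] at h4
    calc ∑ t ∈ A, (z ∘ ρ) t = ∑ u ∈ A.image ρ, z u := h2
      _ ≤ topSum μ A.card := h4

lemma rado {n : ℕ} {μ : Fin n → ℤ} (hμ : Antitone μ) {z : Fin n → ℤ} (hmaj : Maj μ z) :
    inPmu n μ z := by
  set ρ : Equiv.Perm (Fin n) := (Fin.revPerm).trans (Tuple.sort z) with hρ
  have hw : Antitone (z ∘ ρ) := by
    intro s t hst
    exact Tuple.monotone_sort z (Fin.rev_le_rev.mpr hst)
  have hmajw := maj_comp ρ hmaj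
  have hpre : ∀ m, m ≤ n → topSum (z ∘ ρ) m ≤ topSum μ m := by
    intro m hm
    have := hmajw.2 (Finset.univ.filter (fun t : Fin n => t.val < m))
    rwa [card_prefix hm] at this
  set Sm : ℤ := ∑ m ∈ Finset.range (n+1), (topSum μ m - topSum (z ∘ ρ) m) with hSm
  have hPmu := rado_sorted Sm.toNat μ (z ∘ ρ) hμ hw hpre hmajw.1 (Int.self_le_toNat Sm)
  have := inPmu_comp ρ⁻¹ hPmu
  have heq : (z ∘ ρ) ∘ (ρ⁻¹ : Equiv.Perm (Fin n)) = z := by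
    funext t
    simp
  rwa [heq] at this

theorem extend_perm_GLn (n : ℕ) (hn : 1 ≤ n)
    (μ : Fin n → ℤ) (hμ : ∀ i j : Fin n, i ≤ j → μ j ≤ μ i)
    (k l : ℤ) (hkl : k < l) (hln : l ≤ k + n)
    (vk vl : Fin n → ℤ)
    (hvk : inPmu n μ (fun t => vk t - omegaVec n k t))
    (hvl : inPmu n μ (fun t => vl t - omegaVec n l t))
    (hmin : ∀ t, vl t - vk t = 0 ∨ vl t - vk t = 1)
    (hsum : (∑ t, vl t) - (∑ t, vk t) = l - k) :
    ∃ v' : Fin n → ℤ,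
      inPmu n μ (fun t => v' t - omegaVec n (k + 1) t) ∧
      (∀ t, v' t - vk t = 0 ∨ v' t - vk t = 1) ∧
      (∀ t, vl t - v' t = 0 ∨ vl t - v' t = 1) ∧
      (∑ t, v' t) = (∑ t, vk t) + 1 := by
  have hn0 : 0 < n := hn
  have hanti : Antitone μ := fun i j h => hμ i j h
  set t0 : Fin n := jumpIdx n hn0 k with ht0
  have hstep : ∀ t, omegaVec n (k + 1) t = omegaVec n k t + (if t = t0 then 1 else 0) :=
    fun t => omega_succ' n hn0 k t
  rcases hmin t0 with h0 | h1
  -- hard case below; easy case first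
  case inr =>
    refine ⟨fun t => vk t + (if t = t0 then 1 else 0), ?_, ?_, ?_, ?_⟩
    · have heq : (fun t => (vk t + (if t = t0 then 1 else 0)) - omegaVec n (k + 1) t)
          = (fun t => vk t - omegaVec n k t) := by
        funext t; rw [hstep t]; ring
      rw [heq]; exact hvk
    · intro t; by_cases h : t = t0 <;> simp [h]
    · intro t
      show vl t - (vk t + (if t = t0 then 1 else 0)) = 0 ∨
        vl t - (vk t + (if t = t0 then 1 else 0)) = 1
      by_cases h : t = t0
      · subst h; rw [if_pos rfl]; omega
      · rw [if_neg h]; have := hmin t; omega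
    · rw [Finset.sum_add_distrib, Finset.sum_ite_eq' Finset.univ t0 (fun _ => (1:ℤ))]
      simp
  case inl =>
    set x : Fin n → ℤ := fun t => vk t - omegaVec n k t with hx_def
    set y : Fin n → ℤ := fun t => vl t - omegaVec n l t with hy_def
    have hmx : Maj μ x := maj_of_inPmu hanti hvk
    have hmy : Maj μ y := maj_of_inPmu hanti hvl
    obtain ⟨j, hjval, hjn⟩ : ∃ j : ℕ, (j : ℤ) = l - k ∧ j ≤ n := ⟨(l - k).toNat, by omega, by omega⟩
    have hd0 : ∀ t, omegaVec n k t ≤ omegaVec n l t := by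
      intro t
      have := omega_mono n hn0 k j t
      rwa [show k + (j : ℤ) = l from by omega] at this
    have hd1 : ∀ t, omegaVec n l t ≤ omegaVec n k t + 1 := by
      intro t
      have h2 := omega_period n hn0 k t
      obtain ⟨j2, hj2⟩ : ∃ j2 : ℕ, (j2 : ℤ) = k + n - l := ⟨(k + n - l).toNat, by omega⟩
      have h3 := omega_mono n hn0 l j2 t
      rw [show l + (j2 : ℤ) = k + n from by omega] at h3
      omega
    have hdt0 : omegaVec n l t0 = omegaVec n k t0 + 1 := by
      have h2 := hstep t0
      rw [if_pos rfl] at h2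
      obtain ⟨j3, hj3⟩ : ∃ j3 : ℕ, (j3 : ℤ) = l - (k + 1) := ⟨(l - (k + 1)).toNat, by omega⟩
      have h3 := omega_mono n hn0 (k + 1) j3 t0
      rw [show (k + 1) + (j3 : ℤ) = l from by omega] at h3
      have h4 := hd1 t0
      omega
    have hyx : ∀ t, y t - x t = (vl t - vk t) - (omegaVec n l t - omegaVec n k t) := by
      intro t; simp only [hx_def, hy_def]; ring
    have hyxt0 : y t0 - x t0 = -1 := by rw [hyx t0]; omega
    have hyxsum : ∑ t, (y t - x t) = 0 := by
      rw [Finset.sum_sub_distrib, hmy.1, hmx.1]; ring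
    set S' := Finset.univ.filter (fun s => x s < y s) with hS'
    have key : ∃ s ∈ S', Maj μ (fun t => x t + (if t = s then 1 else 0)
        - (if t = t0 then 1 else 0)) := by
      by_contra hcon
      push_neg at hcon
      have hAs : ∀ s ∈ S', ∃ A : Finset (Fin n), s ∈ A ∧ t0 ∉ A ∧
          ∑ t ∈ A, x t = topSum μ A.card := by
        intro s hs
        have hnm := hcon s hs
        simp only [Maj, not_and, not_forall, not_le] at hnm
        have hsum0 : ∑ t, (x t + (if t = s then 1 else 0) - (if t = t0 then 1 else 0))
            = ∑ t, μ t := by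
          rw [Finset.sum_sub_distrib, Finset.sum_add_distrib,
            Finset.sum_ite_eq' Finset.univ s (fun _ => (1:ℤ)),
            Finset.sum_ite_eq' Finset.univ t0 (fun _ => (1:ℤ))]
          simp [hmx.1]
        obtain ⟨A, hA⟩ := hnm hsum0
        have hcomp : ∑ t ∈ A, (x t + (if t = s then 1 else 0) - (if t = t0 then 1 else 0))
            = ∑ t ∈ A, x t + (if s ∈ A then 1 else 0) - (if t0 ∈ A then 1 else 0) := by
          rw [Finset.sum_sub_distrib, Finset.sum_add_distrib,
            Finset.sum_ite_eq' A s (fun _ => (1:ℤ)), Finset.sum_ite_eq' A t0 (fun _ => (1:ℤ))]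
        rw [hcomp] at hA
        have h5 := hmx.2 A
        have hs1 : s ∈ A := by
          by_contra hs1
          rw [if_neg hs1] at hA
          split_ifs at hA <;> omega
        have ht1 : t0 ∉ A := by
          intro ht1
          rw [if_pos hs1, if_pos ht1] at hA
          omega
        refine ⟨A, hs1, ht1, ?_⟩
        rw [if_pos hs1, if_neg ht1] at hA
        omega
      obtain ⟨A, hSsub, ht0A, htight⟩ := exists_tight_superset hanti hmx.2 t0 S' hAs
      have h6 := hmy.2 A
      have h7 : ∑ t ∈ A, (y t - x t) = ∑ t ∈ A, y t - ∑ t ∈ A, x t := Finset.sum_sub_distrib _ _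
      have h8 : 1 ≤ ∑ t ∈ A, (y t - x t) := by
        have hcompl : ∑ t ∈ A, (y t - x t) + ∑ t ∈ Aᶜ, (y t - x t) = 0 := by
          rw [Finset.sum_add_sum_compl]; exact hyxsum
        have ht0c : t0 ∈ Aᶜ := Finset.mem_compl.mpr ht0A
        have h10 : (y t0 - x t0) + ∑ t ∈ Aᶜ.erase t0, (y t - x t) = ∑ t ∈ Aᶜ, (y t - x t) :=
          Finset.add_sum_erase Aᶜ (fun t => y t - x t) ht0c
        have h11 : ∑ t ∈ Aᶜ.erase t0, (y t - x t) ≤ 0 := by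
          apply Finset.sum_nonpos
          intro t ht
          have htA : t ∉ A := Finset.mem_compl.mp (Finset.mem_of_mem_erase ht)
          have htS : t ∉ S' := fun hc => htA (hSsub hc)
          have : ¬ x t < y t := by
            intro hc
            exact htS (Finset.mem_filter.mpr ⟨Finset.mem_univ t, hc⟩)
          omega
        omega
      omega
    obtain ⟨s, hsS, hmaj'⟩ := key
    have hs_xy : x s < y s := (Finset.mem_filter.mp hsS).2
    have hvls : vl s - vk s = 1 := by
      have := hmin s
      have := hd0 s
      have := hyx s
      omega
    refine ⟨fun t => vk t + (if t = s then 1 else 0), ?_, ?_, ?_, ?_⟩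
    · have heq : (fun t => (vk t + (if t = s then 1 else 0)) - omegaVec n (k + 1) t)
          = (fun t => x t + (if t = s then 1 else 0) - (if t = t0 then 1 else 0)) := by
        funext t
        rw [hstep t]
        simp only [hx_def]
        ring
      rw [heq]
      exact rado hanti hmaj'
    · intro t; by_cases h : t = s <;> simp [h]
    · intro t
      show vl t - (vk t + (if t = s then 1 else 0)) = 0 ∨
        vl t - (vk t + (if t = s then 1 else 0)) = 1
      by_cases h : t = s
      · subst h; rw [if_pos rfl]; omega
      · rw [if_neg h]; have := hmin t; omega
    · rw [Finset.sum_add_distrib, Finset.sum_ite_eq' Finset.univ s (fun _ => (1:ℤ))]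
      simp
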